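/- Let C ≥ 2, d ≥ 1, 0 ≤ γ < 1, and let D = {(x_i, y_i)}_{i=1}^{N} be a dataset with x_i ∈ [−1, 1]^d and y_i ∈ {1, …, C}. Let 𝒲_γ be the set of matrices W ∈ ℝ^{C×d} whose rows each have ℓ₂ norm exactly √d and whose distinct rows have pairwise cosine similarity at most γ, and assume 𝒲_γ is nonempty. Let α = inf over W ∈ 𝒲_γ of (1/N) Σ_{i=1}^{N} ℒ(x_i, y_i; W). Then for every ε > 0 there exist a matrix W ∈ 𝒲_γ and perturbations δ_1, …, δ_N ∈ ℝ^d such that (i) for every i and every c ≠ y_i, ⟨W_{y_i}, x_i + δ_i⟩ > ⟨W_c, x_i + δ_i⟩ (the poisoned dataset {(x_i + δ_i, y_i)} is linearly separable by W), and (ii) (2/N) Σ_{i=1}^{N} ‖δ_i‖₂² ≤ 32α/(1 − γ)² + ε. -/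

import Mathlib

open scoped BigOperators

/-- The margin loss `ℒ(x, y; W) = max(max_{t ≠ y} ⟨W_t, x⟩ − ⟨W_y, x⟩, 0)`
of a linear classifier with weight rows `W_c`. -/
noncomputable def marginLoss {C d : ℕ} (W : Fin C → EuclideanSpace ℝ (Fin d))
    (x : EuclideanSpace ℝ (Fin d)) (y : Fin C) : ℝ :=
  max (⨆ t : {t : Fin C // t ≠ y}, ((inner ℝ (W t.1) x : ℝ) - (inner ℝ (W y) x : ℝ))) 0

set_option maxHeartbeats 1000000 in
/-- existence of linearly separable poisons of small total
distortion. With `𝒲_γ` the set of weight matrices with rows of norm `√d` and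
pairwise cosine similarity at most `γ`, and `α` the infimum over `𝒲_γ` of the
average margin loss on the dataset, for every `ε > 0` there exist `W ∈ 𝒲_γ`
and perturbations `δᵢ` such that the poisoned dataset is linearly separable by
`W` and `(2/N) Σᵢ ‖δᵢ‖² ≤ 32α/(1−γ)² + ε`. -/
theorem separable_poisons_of_small_distortion
    (C d N : ℕ) (hC : 2 ≤ C) (hd : 1 ≤ d) (hN : 1 ≤ N)
    (γ : ℝ) (hγ0 : 0 ≤ γ) (hγ1 : γ < 1)
    (x : Fin N → EuclideanSpace ℝ (Fin d)) (hx : ∀ i j, |x i j| ≤ 1)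
    (y : Fin N → Fin C)
    (Wset : Set (Fin C → EuclideanSpace ℝ (Fin d)))
    (hWset : Wset = {W | (∀ c, ‖W c‖ = Real.sqrt d) ∧
      ∀ c c', c ≠ c' → (inner ℝ (W c) (W c') : ℝ) ≤ γ * d})
    (hne : Wset.Nonempty)
    (α : ℝ)
    (hα : α = ⨅ W : Wset, (1 / N : ℝ) * ∑ i : Fin N, marginLoss W.1 (x i) (y i)) :
    ∀ ε > 0, ∃ W ∈ Wset, ∃ δ : Fin N → EuclideanSpace ℝ (Fin d),
      (∀ i, ∀ c, c ≠ y i →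
        (inner ℝ (W (y i)) (x i + δ i) : ℝ) > (inner ℝ (W c) (x i + δ i) : ℝ)) ∧
      (2 / N : ℝ) * ∑ i : Fin N, ‖δ i‖ ^ 2 ≤ 32 * α / (1 - γ) ^ 2 + ε := by
  intro ε hε
  have hγ' : (0:ℝ) < 1 - γ := by linarith
  have hd1 : (1:ℝ) ≤ (d:ℝ) := by exact_mod_cast hd
  have hd0 : (0:ℝ) < (d:ℝ) := by linarith
  have hN0 : (0:ℝ) < (N:ℝ) := by exact_mod_cast hN
  set ε' : ℝ := ε * (1 - γ)^2 / 8 with hε'def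
  have hε'pos : 0 < ε' := by positivity
  set η : ℝ := min 1 (ε * (1 - γ)^2 / 32) with hηdef
  have hηpos : 0 < η := lt_min one_pos (by positivity)
  have hη1 : η ≤ 1 := min_le_left _ _
  have hη32 : η ≤ ε * (1 - γ)^2 / 32 := min_le_right _ _
  haveI hneS : Nonempty Wset := hne.to_subtype
  haveI : Nontrivial (Fin C) := by
    rw [Fin.nontrivial_iff_two_le]; exact hC
  haveI hnety : ∀ i : Fin N, Nonempty {t : Fin C // t ≠ y i} := fun i => by
    obtain ⟨t, ht⟩ := exists_ne (y i)
    exact ⟨⟨t, ht⟩⟩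
  -- margin loss is nonnegative
  have hml0 : ∀ (W : Fin C → EuclideanSpace ℝ (Fin d)) i,
      0 ≤ marginLoss W (x i) (y i) := fun W i => le_max_right _ _
  -- α ≥ 0
  have hα0 : 0 ≤ α := by
    rw [hα]
    refine Real.iInf_nonneg fun W => ?_
    have : (0:ℝ) ≤ ∑ i : Fin N, marginLoss W.1 (x i) (y i) :=
      Finset.sum_nonneg fun i _ => hml0 _ i
    positivity
  -- choose a near-optimal W
  obtain ⟨⟨W, hWmem⟩, hWlt⟩ :
      ∃ W : Wset, (1 / N : ℝ) * ∑ i : Fin N, marginLoss W.1 (x i) (y i) < α + ε' := by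
    apply exists_lt_of_ciInf_lt
    rw [← hα]; linarith
  rw [hWset] at hWmem
  obtain ⟨hWnorm, hWcos⟩ := hWmem
  -- basic norm facts
  have hsq : Real.sqrt d * Real.sqrt d = (d:ℝ) := Real.mul_self_sqrt (le_of_lt hd0)
  have hxnorm : ∀ i, ‖x i‖ ≤ Real.sqrt d := by
    intro i
    rw [EuclideanSpace.norm_eq]
    apply Real.sqrt_le_sqrt
    calc ∑ j, ‖x i j‖ ^ 2 ≤ ∑ _j : Fin d, (1:ℝ) := by
          refine Finset.sum_le_sum fun j _ => ?_
          have := hx i j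
          rw [Real.norm_eq_abs]
          nlinarith [abs_nonneg (x i j)]
      _ = (d:ℝ) := by simp
  set L : Fin N → ℝ := fun i => marginLoss W (x i) (y i) with hLdef
  have hL0 : ∀ i, 0 ≤ L i := fun i => hml0 W i
  have hLle : ∀ i c, c ≠ y i →
      (inner ℝ (W c) (x i) : ℝ) - (inner ℝ (W (y i)) (x i) : ℝ) ≤ L i := by
    intro i c hc
    have hLi : L i = max (⨆ t : {t : Fin C // t ≠ y i},
        ((inner ℝ (W t.1) (x i) : ℝ) - (inner ℝ (W (y i)) (x i) : ℝ))) 0 := rfl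
    rw [hLi]
    refine le_trans ?_ (le_max_left _ _)
    exact le_ciSup (f := fun t : {t : Fin C // t ≠ y i} =>
      ((inner ℝ (W t.1) (x i) : ℝ) - (inner ℝ (W (y i)) (x i) : ℝ)))
      (Set.Finite.bddAbove (Set.finite_range _)) ⟨c, hc⟩
  have hinner_le : ∀ (c : Fin C) i, |(inner ℝ (W c) (x i) : ℝ)| ≤ (d:ℝ) := by
    intro c i
    calc |(inner ℝ (W c) (x i) : ℝ)| ≤ ‖W c‖ * ‖x i‖ := abs_real_inner_le_norm _ _
      _ ≤ Real.sqrt d * Real.sqrt d := by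
          rw [hWnorm c]
          exact mul_le_mul_of_nonneg_left (hxnorm i) (Real.sqrt_nonneg _)
      _ = (d:ℝ) := hsq
  have hL2d : ∀ i, L i ≤ 2 * d := by
    intro i
    have hLi : L i = max (⨆ t : {t : Fin C // t ≠ y i},
        ((inner ℝ (W t.1) (x i) : ℝ) - (inner ℝ (W (y i)) (x i) : ℝ))) 0 := rfl
    rw [hLi]
    refine max_le (ciSup_le fun t => ?_) (by positivity)
    have h1 := abs_le.mp (hinner_le t.1 i)
    have h2 := abs_le.mp (hinner_le (y i) i)
    linarith [h1.2, h2.1]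
  have hsumL : ∑ i : Fin N, L i ≤ N * (α + ε') := by
    have h := hWlt
    rw [div_mul_eq_mul_div, one_mul, div_lt_iff₀ hN0] at h
    linarith [h]
  -- define perturbations
  set t : Fin N → ℝ := fun i => (L i + η) / ((1 - γ) * d) with htdef
  have ht0 : ∀ i, 0 ≤ t i := fun i => by
    apply div_nonneg (by linarith [hL0 i]) (by positivity)
  have htmul : ∀ i, t i * ((1 - γ) * d) = L i + η := fun i =>
    div_mul_cancel₀ _ (by positivity)
  set δ : Fin N → EuclideanSpace ℝ (Fin d) := fun i => t i • W (y i) with hδdef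
  have hWyy : ∀ i, (inner ℝ (W (y i)) (W (y i)) : ℝ) = (d:ℝ) := by
    intro i
    rw [real_inner_self_eq_norm_sq, hWnorm (y i)]
    rw [sq]; exact hsq
  refine ⟨W, by rw [hWset]; exact ⟨hWnorm, hWcos⟩, δ, ?_, ?_⟩
  · -- separability
    intro i c hc
    have hic : (inner ℝ (W c) (W (y i)) : ℝ) ≤ γ * d := hWcos c (y i) hc
    have e1 : (inner ℝ (W (y i)) (x i + δ i) : ℝ)
        = (inner ℝ (W (y i)) (x i) : ℝ) + t i * (d:ℝ) := by
      rw [inner_add_right, real_inner_smul_right, hWyy i]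
    have e2 : (inner ℝ (W c) (x i + δ i) : ℝ)
        = (inner ℝ (W c) (x i) : ℝ) + t i * (inner ℝ (W c) (W (y i)) : ℝ) := by
      rw [inner_add_right, real_inner_smul_right]
    rw [e1, e2]
    have h1 : t i * (inner ℝ (W c) (W (y i)) : ℝ) ≤ t i * (γ * d) :=
      mul_le_mul_of_nonneg_left hic (ht0 i)
    have h2 := htmul i
    have h3 := hLle i c hc
    nlinarith [hηpos]
  · -- distortion bound
    have hδnorm : ∀ i, ‖δ i‖ ^ 2 = (L i + η)^2 / ((1 - γ)^2 * d) := by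
      intro i
      have : ‖δ i‖ = t i * Real.sqrt d := by
        rw [hδdef]
        simp only [norm_smul, Real.norm_eq_abs, abs_of_nonneg (ht0 i), hWnorm (y i)]
      rw [this, mul_pow, sq (Real.sqrt d), hsq, htdef]
      field_simp
    have hS : ∑ i : Fin N, ‖δ i‖ ^ 2
        = (∑ i : Fin N, (L i + η)^2) / ((1 - γ)^2 * d) := by
      rw [Finset.sum_div]
      exact Finset.sum_congr rfl fun i _ => hδnorm i
    set S : ℝ := ∑ i : Fin N, (L i + η)^2 with hSdef
    have hSle : S ≤ 2 * d * (∑ i : Fin N, L i) + N * (4 * d * η + η^2) := by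
      rw [hSdef]
      calc ∑ i : Fin N, (L i + η)^2
          ≤ ∑ i : Fin N, (2 * d * L i + (4 * d * η + η^2)) := by
            refine Finset.sum_le_sum fun i _ => ?_
            nlinarith [hL0 i, hL2d i, hηpos.le, hd1]
        _ = 2 * d * (∑ i : Fin N, L i) + N * (4 * d * η + η^2) := by
            rw [Finset.sum_add_distrib, ← Finset.mul_sum, Finset.sum_const]
            simp only [nsmul_eq_mul, Finset.card_univ, Fintype.card_fin]
    have key : 2 * S ≤ 32 * α * N * d + ε * N * (1 - γ)^2 * d := by
      have hsumL' : ∑ i : Fin N, L i ≤ (N:ℝ) * α + N * (ε * (1 - γ)^2 / 8) := by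
        rw [hε'def] at hsumL; linarith
      have k1 : 4 * (d:ℝ) * (∑ i : Fin N, L i)
          ≤ 4 * (d:ℝ) * ((N:ℝ) * α + N * (ε * (1 - γ)^2 / 8)) :=
        mul_le_mul_of_nonneg_left hsumL' (by positivity)
      have k2 : (0:ℝ) ≤ α * N * d :=
        mul_nonneg (mul_nonneg hα0 hN0.le) hd0.le
      have k3 : 8 * ((N:ℝ) * d) * η ≤ 8 * ((N:ℝ) * d) * (ε * (1 - γ)^2 / 32) :=
        mul_le_mul_of_nonneg_left hη32 (by positivity)
      have hη2 : η^2 ≤ ε * (1 - γ)^2 / 32 := by nlinarith [hηpos.le, hη1, hη32]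
      have k4 : 2 * (N:ℝ) * η^2 ≤ 2 * (N:ℝ) * (ε * (1 - γ)^2 / 32) :=
        mul_le_mul_of_nonneg_left hη2 (by positivity)
      have k5 : (N:ℝ) * (ε * (1 - γ)^2 / 16) ≤ (N:ℝ) * d * (ε * (1 - γ)^2 / 16) := by
        have hNd : (N:ℝ) ≤ (N:ℝ) * d := by nlinarith
        exact mul_le_mul_of_nonneg_right hNd (by positivity)
      have k6 : (0:ℝ) ≤ (N:ℝ) * d * (ε * (1 - γ)^2) := by positivity
      linarith [hSle, k1, k2, k3, k4, k5, k6]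
    rw [hS]
    have heq1 : (2 / N : ℝ) * (S / ((1 - γ)^2 * d)) = (2 * S) / (N * ((1 - γ)^2 * d)) := by
      field_simp
    have heq2 : 32 * α / (1 - γ)^2 + ε
        = (32 * α * N * d + ε * N * (1 - γ)^2 * d) / (N * ((1 - γ)^2 * d)) := by
      field_simp
    rw [heq1, heq2]
    exact (div_le_div_iff_of_pos_right (by positivity)).mpr key
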